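/- Let a : [0,∞) → [0,∞) be continuous with ∫₀^∞ a(s) ds = ∞. Let x, y : [0,∞) → ℝ be differentiable functions and suppose there are constants 0 < m ≤ M such that m ≤ x(t) ≤ M and m ≤ y(t) ≤ M for all t ≥ 0, and that the function u(t) = ln x(t) − ln y(t) satisfies u'(t) = −a(t)(x(t) − y(t)) for all t ≥ 0. Then x(t) − y(t) → 0 as t → ∞. (This is the deterministic pathwise core of the proof of Theorem 5.1 of the paper on global attractivity of the stochastic logistic equation.) -/

import Mathlib

open Filter MeasureTheory Set intervalIntegral

private lemma log_aux (m p q : ℝ) (hm : 0 < m) (hpm : m ≤ p) (hqm : m ≤ q)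
    (hqp : q ≤ p) : m * (Real.log p - Real.log q) ≤ p - q := by
  have hq0 : 0 < q := hm.trans_le hqm
  have hp0 : 0 < p := hm.trans_le hpm
  have h := Real.log_le_sub_one_of_pos (show 0 < p / q from div_pos hp0 hq0)
  rw [Real.log_div hp0.ne' hq0.ne'] at h
  have h2 : p / q - 1 = (p - q) / q := by field_simp
  rw [h2] at h
  have h3 : (p - q) / q ≤ (p - q) / m :=
    div_le_div_of_nonneg_left (by linarith) hm hqm
  have h4 : Real.log p - Real.log q ≤ (p - q) / m := h.trans h3
  rw [le_div_iff₀ hm] at h4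
  linarith

private lemma sub_le_log_aux (m M p q : ℝ) (hm : 0 < m) (hpm : m ≤ p) (hpM : p ≤ M)
    (hqm : m ≤ q) (hqp : q ≤ p) : p - q ≤ M * (Real.log p - Real.log q) := by
  have hq0 : 0 < q := hm.trans_le hqm
  have hp0 : 0 < p := hm.trans_le hpm
  have h := Real.log_le_sub_one_of_pos (show 0 < q / p from div_pos hq0 hp0)
  rw [Real.log_div hq0.ne' hp0.ne'] at h
  have h2 : q / p - 1 = -((p - q) / p) := by field_simp; ring
  rw [h2] at h
  -- h : log q - log p ≤ -((p-q)/p), i.e. (p-q)/p ≤ log p - log q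
  have h3 : (p - q) / M ≤ (p - q) / p :=
    div_le_div_of_nonneg_left (by linarith) hp0 hpM
  have h4 : (p - q) / M ≤ Real.log p - Real.log q := by linarith
  have hM0 : 0 < M := hm.trans_le (hpm.trans hpM)
  rw [div_le_iff₀ hM0] at h4
  linarith

/-- Deterministic core of Theorem 5.1 (global attractivity): if `a ≥ 0` is continuous on
`[0,∞)` with divergent integral, `x, y` are differentiable, trapped in `[m, M] ⊂ (0,∞)`,
and `u(t) = ln x(t) − ln y(t)` satisfies `u'(t) = −a(t)(x(t) − y(t))`, then
`x(t) − y(t) → 0` as `t → ∞`. -/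
theorem stmt_9 (a x y : ℝ → ℝ) (m M : ℝ)
    (ha_cont : ContinuousOn a (Set.Ici (0 : ℝ)))
    (ha_nonneg : ∀ s ≥ (0 : ℝ), 0 ≤ a s)
    (ha_div : Filter.Tendsto (fun t => ∫ s in (0 : ℝ)..t, a s)
      Filter.atTop Filter.atTop)
    (hx_diff : ∀ t ≥ (0 : ℝ), DifferentiableAt ℝ x t)
    (hy_diff : ∀ t ≥ (0 : ℝ), DifferentiableAt ℝ y t)
    (hm : 0 < m) (hmM : m ≤ M)
    (hx_bdd : ∀ t ≥ (0 : ℝ), m ≤ x t ∧ x t ≤ M)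
    (hy_bdd : ∀ t ≥ (0 : ℝ), m ≤ y t ∧ y t ≤ M)
    (hu : ∀ t ≥ (0 : ℝ),
      HasDerivAt (fun s => Real.log (x s) - Real.log (y s))
        (-(a t) * (x t - y t)) t) :
    Filter.Tendsto (fun t => x t - y t) Filter.atTop (nhds 0) := by
  set u : ℝ → ℝ := fun s => Real.log (x s) - Real.log (y s) with hu_def
  -- extended coefficient
  set b : ℝ → ℝ := fun s => a (max s 0) with hb_def
  have hb_cont : Continuous b :=
    ha_cont.comp_continuous (continuous_id.max continuous_const)
      (fun s => le_max_right s 0)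
  have hb_nonneg : ∀ s, 0 ≤ b s := fun s => ha_nonneg _ (le_max_right s 0)
  have hb_eq : ∀ s ≥ (0 : ℝ), b s = a s := fun s hs => by
    simp [hb_def, max_eq_left hs]
  set A : ℝ → ℝ := fun t => ∫ s in (0 : ℝ)..t, b s with hA_def
  have hA_deriv : ∀ t : ℝ, HasDerivAt A (b t) t := fun t =>
    intervalIntegral.integral_hasDerivAt_right
      (hb_cont.intervalIntegrable _ _)
      (hb_cont.stronglyMeasurable.stronglyMeasurableAtFilter)
      hb_cont.continuousAt
  have hA_div : Filter.Tendsto A Filter.atTop Filter.atTop := by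
    apply ha_div.congr'
    filter_upwards [eventually_ge_atTop (0 : ℝ)] with t ht
    apply intervalIntegral.integral_congr
    intro s hs
    rw [uIcc_of_le ht] at hs
    exact (hb_eq s hs.1).symm
  -- key pointwise inequalities
  have key : ∀ t ≥ (0 : ℝ), m * (u t) ^ 2 ≤ u t * (x t - y t) := by
    intro t ht
    obtain ⟨hxm, hxM⟩ := hx_bdd t ht
    obtain ⟨hym, hyM⟩ := hy_bdd t ht
    rcases le_total (y t) (x t) with h | h
    · have h1 := log_aux m (x t) (y t) hm hxm hym h
      have hu0 : 0 ≤ Real.log (x t) - Real.log (y t) := by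
        have := Real.log_le_log (hm.trans_le hym) h
        linarith
      show m * (Real.log (x t) - Real.log (y t)) ^ 2 ≤
        (Real.log (x t) - Real.log (y t)) * (x t - y t)
      nlinarith [mul_le_mul_of_nonneg_left h1 hu0]
    · have h1 := log_aux m (y t) (x t) hm hym hxm h
      have hu0 : 0 ≤ Real.log (y t) - Real.log (x t) := by
        have := Real.log_le_log (hm.trans_le hxm) h
        linarith
      show m * (Real.log (x t) - Real.log (y t)) ^ 2 ≤
        (Real.log (x t) - Real.log (y t)) * (x t - y t)
      nlinarith [mul_le_mul_of_nonneg_left h1 hu0]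
  have habs : ∀ t ≥ (0 : ℝ), |x t - y t| ≤ M * |u t| := by
    intro t ht
    obtain ⟨hxm, hxM⟩ := hx_bdd t ht
    obtain ⟨hym, hyM⟩ := hy_bdd t ht
    rcases le_total (y t) (x t) with h | h
    · have h1 := sub_le_log_aux m M (x t) (y t) hm hxm hxM hym h
      have hu0 : 0 ≤ u t := by
        have := Real.log_le_log (hm.trans_le hym) h
        simp only [hu_def]; linarith
      rw [abs_of_nonneg (by linarith : (0:ℝ) ≤ x t - y t), abs_of_nonneg hu0]
      exact h1
    · have h1 := sub_le_log_aux m M (y t) (x t) hm hym hyM hxm h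
      have hu0 : u t ≤ 0 := by
        have := Real.log_le_log (hm.trans_le hxm) h
        simp only [hu_def]; linarith
      rw [abs_of_nonpos (by linarith : x t - y t ≤ 0), abs_of_nonpos hu0]
      simp only [hu_def] at h1 ⊢; linarith
  -- the Lyapunov function
  set g : ℝ → ℝ := fun t => (u t) ^ 2 * Real.exp (2 * m * A t) with hg_def
  have hg_deriv : ∀ t ≥ (0 : ℝ), HasDerivAt g
      ((2 * u t * (-(a t) * (x t - y t))) * Real.exp (2 * m * A t)
        + (u t) ^ 2 * (Real.exp (2 * m * A t) * (2 * m * b t))) t := by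
    intro t ht
    have h1 : HasDerivAt (fun s => (u s) ^ 2) (2 * u t * (-(a t) * (x t - y t))) t := by
      have := (hu t ht).fun_pow 2
      simpa [mul_comm, mul_assoc, mul_left_comm] using this
    have h2 : HasDerivAt (fun s => Real.exp (2 * m * A s))
        (Real.exp (2 * m * A t) * (2 * m * b t)) t := by
      have hA2 : HasDerivAt (fun s => 2 * m * A s) (2 * m * b t) t :=
        (hA_deriv t).const_mul (2 * m)
      exact hA2.exp
    exact h1.mul h2
  have hg_cont : ContinuousOn g (Set.Ici (0 : ℝ)) := fun t ht =>
    ((hg_deriv t ht).differentiableAt.continuousAt).continuousWithinAt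
  have hg_anti : AntitoneOn g (Set.Ici (0 : ℝ)) := by
    apply antitoneOn_of_deriv_nonpos (convex_Ici 0) hg_cont
    · intro t ht
      rw [interior_Ici] at ht
      exact ((hg_deriv t (le_of_lt ht)).differentiableAt).differentiableWithinAt
    · intro t ht
      rw [interior_Ici] at ht
      have ht' : (0 : ℝ) ≤ t := le_of_lt ht
      rw [(hg_deriv t ht').deriv]
      rw [hb_eq t ht']
      have hfac : (2 * a t * Real.exp (2 * m * A t)) *
          (m * (u t) ^ 2 - u t * (x t - y t)) ≤ 0 :=
        mul_nonpos_of_nonneg_of_nonpos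
          (mul_nonneg (mul_nonneg (by norm_num) (ha_nonneg t ht'))
            (Real.exp_pos _).le)
          (by linarith [key t ht'])
      nlinarith [hfac]
  -- decay bound
  have hbound : ∀ t ≥ (0 : ℝ), (u t) ^ 2 ≤ (u 0) ^ 2 * Real.exp (-(2 * m * A t)) := by
    intro t ht
    have hA0 : A 0 = 0 := intervalIntegral.integral_same
    have h1 : (u t) ^ 2 * Real.exp (2 * m * A t) ≤ (u 0) ^ 2 := by
      have := hg_anti Set.self_mem_Ici ht ht
      simpa [hg_def, hA0] using this
    rw [Real.exp_neg, ← div_eq_mul_inv, le_div_iff₀ (Real.exp_pos _)]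
    exact h1
  -- the bound tends to zero
  have hexp : Filter.Tendsto (fun t => (u 0) ^ 2 * Real.exp (-(2 * m * A t)))
      Filter.atTop (nhds 0) := by
    have h2m : Filter.Tendsto (fun t => 2 * m * A t) Filter.atTop Filter.atTop :=
      hA_div.const_mul_atTop (by linarith)
    have : Filter.Tendsto (fun t => Real.exp (-(2 * m * A t))) Filter.atTop (nhds 0) :=
      Real.tendsto_exp_neg_atTop_nhds_zero.comp h2m
    simpa using this.const_mul ((u 0) ^ 2)
  have hv0 : Filter.Tendsto (fun t => (u t) ^ 2) Filter.atTop (nhds 0) := by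
    apply tendsto_of_tendsto_of_tendsto_of_le_of_le' tendsto_const_nhds hexp
    · filter_upwards with t using sq_nonneg _
    · filter_upwards [eventually_ge_atTop (0 : ℝ)] with t ht using hbound t ht
  have huabs : Filter.Tendsto (fun t => |u t|) Filter.atTop (nhds 0) := by
    have h := (Real.continuous_sqrt.tendsto 0).comp hv0
    rw [Real.sqrt_zero] at h
    refine h.congr fun t => ?_
    simp [Function.comp, Real.sqrt_sq_eq_abs]
  -- squeeze for x - y
  apply tendsto_of_tendsto_of_tendsto_of_le_of_le'
    (f := fun t => x t - y t)
    (g := fun t => -(M * |u t|)) (h := fun t => M * |u t|)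
  · simpa using (huabs.const_mul M).neg
  · simpa using huabs.const_mul M
  · filter_upwards [eventually_ge_atTop (0 : ℝ)] with t ht
    have := habs t ht
    have := abs_le.1 this
    linarith [this.1]
  · filter_upwards [eventually_ge_atTop (0 : ℝ)] with t ht
    exact (abs_le.1 (habs t ht)).2
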